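/- Let ρ ∈ (0,1), d ≥ 1 a natural number, and m ≥ 1 an integer. If Z_1,...,Z_m are independent random variables with Z_k ~ Poisson(1/k), then E[∏_{k=1}^m (1/(1-ρ^(2k)))^(d·Z_k)] ≤ exp(dρ²/(1-ρ²) + c(d,ρ²)·ρ⁴/(1-ρ⁴)), where c(d,ρ²) = d(d+1)/(2(1-ρ²)^(d+2)). -/

import Mathlib

open MeasureTheory ProbabilityTheory
open scoped NNReal ENNReal Nat

/-- Key algebraic inequality: `(1/(1-x))^d ≤ 1 + d x + (d(d+1)/2) x² (1/(1-x))^(d+2)`. -/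
lemma aux_key (x : ℝ) (hx0 : 0 ≤ x) (hx1 : x < 1) (d : ℕ) :
    (1/(1-x))^d ≤ 1 + d*x + (d*(d+1)/2) * x^2 * (1/(1-x))^(d+2) := by
  set u : ℝ := 1/(1-x) with hu
  have hxpos : 0 < 1 - x := by linarith
  have hu1 : 1 ≤ u := by rw [hu, le_div_iff₀ hxpos]; linarith
  have hu0 : (0:ℝ) ≤ u := by linarith
  have hid : u = 1 + x * u := by
    have h := one_div_mul_cancel hxpos.ne'; rw [← hu] at h; linear_combination h
  induction d with
  | zero => simp
  | succ d ih =>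
    have hupow : u^(d+2) ≤ u^(d+3) := pow_le_pow_right₀ hu1 (by omega)
    have huu : u ≤ u^(d+3) := by
      calc u = u^1 := (pow_one u).symm
        _ ≤ u^(d+3) := pow_le_pow_right₀ hu1 (by omega)
    have h1 : u * u^d ≤ u * (1 + d*x + (d*(d+1)/2) * x^2 * u^(d+2)) :=
      mul_le_mul_of_nonneg_left ih hu0
    have h2 : u * (1 + d*x) = 1 + ((d:ℝ)+1)*x + ((d:ℝ)+1)*x^2*u := by
      linear_combination (1 + ((d:ℝ)+1)*x) * hid
    have t1 : x^2*u ≤ x^2*u^(d+3) := mul_le_mul_of_nonneg_left huu (sq_nonneg x)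
    have hd0 : (0:ℝ) ≤ (d:ℝ) := Nat.cast_nonneg d
    push_cast
    calc u^(d+1) = u * u^d := by ring
      _ ≤ u * (1 + d*x + (d*(d+1)/2) * x^2 * u^(d+2)) := h1
      _ = (u*(1+d*x)) + ((d:ℝ)*(d+1)/2)*x^2*(u^(d+3)) := by ring
      _ = 1 + ((d:ℝ)+1)*x + ((d:ℝ)+1)*x^2*u + ((d:ℝ)*(d+1)/2)*x^2*u^(d+3) := by rw [h2]
      _ ≤ 1 + ((d:ℝ)+1)*x + ((d:ℝ)+1)*x^2*u^(d+3) + ((d:ℝ)*(d+1)/2)*x^2*u^(d+3) := by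
          nlinarith [t1]
      _ = 1 + ((d:ℝ)+1)*x + (((d:ℝ)+1)*(((d:ℝ)+1)+1)/2)*x^2*u^(d+1+2) := by ring

/-- Partial sums of `∑ r^k/k` are bounded by `-log(1-r) ≤ r/(1-r)`. -/
lemma aux_sum_pow_div (r : ℝ) (h0 : 0 ≤ r) (h1 : r < 1) (m : ℕ) :
    ∑ k ∈ Finset.range m, r^(k+1)/((k:ℝ)+1) ≤ r/(1-r) := by
  have hr1 : 0 < 1 - r := by linarith
  have hs : HasSum (fun n : ℕ => r ^ (n + 1) / (n + 1)) (-Real.log (1 - r)) :=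
    Real.hasSum_pow_div_log_of_abs_lt_one (by rw [abs_of_nonneg h0]; exact h1)
  have hs' : HasSum (fun n : ℕ => r ^ (n + 1) / ((n:ℝ) + 1)) (-Real.log (1 - r)) := by
    exact_mod_cast hs
  have h2 : ∑ k ∈ Finset.range m, r^(k+1)/((k:ℝ)+1) ≤ -Real.log (1 - r) :=
    sum_le_hasSum _ (fun k _ => by positivity) hs'
  refine h2.trans ?_
  rw [show -Real.log (1 - r) = Real.log (1-r)⁻¹ from (Real.log_inv _).symm]
  have hlog := Real.log_le_sub_one_of_pos (x := (1-r)⁻¹) (by positivity)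
  have e : (1-r)⁻¹ - 1 = r/(1-r) := by field_simp; ring
  linarith [hlog]

/-- The "moment generating" computation for the Poisson measure: `E[t^N] = exp(λ(t-1))`. -/
lemma aux_poisson_integral (lam : ℝ≥0) (t : ℝ) (ht : 1 ≤ t) :
    Integrable (fun n : ℕ => t ^ n) (poissonMeasure lam) ∧
    ∫ n : ℕ, (t:ℝ) ^ n ∂(poissonMeasure lam) = Real.exp (lam * (t - 1)) := by
  have ht0 : (0:ℝ) ≤ t := by linarith
  have hbase : HasSum (fun n : ℕ => ((lam:ℝ) * t)^n / n !) (Real.exp (lam*t)) := by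
    rw [Real.exp_eq_exp_ℝ]
    exact NormedSpace.expSeries_div_hasSum_exp _
  have hsum : HasSum (fun n : ℕ => poissonPMFReal lam n * t^n) (Real.exp ((lam:ℝ)*(t-1))) := by
    have h := hbase.mul_left (Real.exp (-(lam:ℝ)))
    have e1 : (fun n : ℕ => Real.exp (-(lam:ℝ)) * (((lam:ℝ)*t)^n / n !)) =
        (fun n : ℕ => poissonPMFReal lam n * t^n) := by
      funext n
      rw [poissonPMFReal, mul_pow]
      ring
    have e2 : Real.exp (-(lam:ℝ)) * Real.exp ((lam:ℝ)*t) = Real.exp ((lam:ℝ)*(t-1)) := by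
      rw [← Real.exp_add]; ring_nf
    rw [e1, e2] at h
    exact h
  have hnn : ∀ n : ℕ, 0 ≤ poissonPMFReal lam n * t^n :=
    fun n => mul_nonneg poissonPMFReal_nonneg (pow_nonneg ht0 n)
  have hint : Integrable (fun n : ℕ => t ^ n) (poissonMeasure lam) := by
    constructor
    · exact (measurable_from_top (f := fun n : ℕ => t ^ n)).aestronglyMeasurable
    · show (∫⁻ n : ℕ, ‖t ^ n‖₊ ∂(poissonMeasure lam)) < ⊤
      have hl := lintegral_countable' (μ := poissonMeasure lam) (fun n : ℕ => (‖t ^ n‖₊ : ℝ≥0∞))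
      rw [hl]
      have : ∀ n : ℕ, (‖t ^ n‖₊ : ℝ≥0∞) * (poissonMeasure lam) {n}
          = ENNReal.ofReal (poissonPMFReal lam n * t^n) := by
        intro n
        rw [show (poissonMeasure lam) {n} = poissonPMF lam n from
          poissonMeasure_singleton lam n]
        rw [show (poissonPMF lam) n = ENNReal.ofReal (poissonPMFReal lam n) from rfl]
        rw [← ENNReal.ofReal_coe_nnreal, coe_nnnorm, Real.norm_of_nonneg (pow_nonneg ht0 n),
          ← ENNReal.ofReal_mul (pow_nonneg ht0 n)]
        rw [mul_comm]
      simp_rw [this]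
      rw [← ENNReal.ofReal_tsum_of_nonneg hnn hsum.summable]
      exact ENNReal.ofReal_lt_top
  refine ⟨hint, ?_⟩
  rw [integral_poissonMeasure' hint]
  have : ∀ n : ℕ, (Real.exp (-(lam:ℝ)) * (lam:ℝ) ^ n / (n ! : ℝ)) • (t^n) = poissonPMFReal lam n * t^n := by
    intro n
    rw [smul_eq_mul, poissonPMFReal]
  simp_rw [this]
  exact hsum.tsum_eq

/-- The expectation of a finite product of independent nonnegative random variables
factorizes. -/
lemma aux_indep_prod {Ω : Type*} [MeasureSpace Ω] [IsProbabilityMeasure (ℙ : Measure Ω)]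
    {ι : Type*} (g : ι → Ω → ℝ) (hmeas : ∀ i, Measurable (g i))
    (hpos : ∀ i ω, 0 ≤ g i ω)
    (hindep : iIndepFun g ℙ) (s : Finset ι) :
    ∫ ω, ∏ i ∈ s, g i ω ∂ℙ = ∏ i ∈ s, ∫ ω, g i ω ∂ℙ := by
  classical
  induction s using Finset.induction with
  | empty => simp
  | @insert a s ha ih =>
    have hfun : (∏ j ∈ s, g j) = fun ω => ∏ j ∈ s, g j ω := by
      funext ω; rw [Finset.prod_apply]
    have hprodmeas : Measurable (∏ j ∈ s, g j) := by
      rw [hfun]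
      exact Finset.measurable_prod _ fun i _ => hmeas i
    have hprodpos : 0 ≤ (∏ j ∈ s, g j) := by
      intro ω
      rw [Finset.prod_apply]
      exact Finset.prod_nonneg fun i _ => hpos i ω
    have hI : IndepFun (∏ j ∈ s, g j) (g a) ℙ :=
      hindep.indepFun_finsetProd_of_notMem hmeas ha
    have key := hI.integral_mul_eq_mul_integral
      hprodmeas.aestronglyMeasurable (hmeas a).aestronglyMeasurable
    rw [Finset.prod_insert ha]
    have e1 : ∫ ω, ∏ i ∈ insert a s, g i ω ∂ℙ = ∫ ω, ((∏ j ∈ s, g j) * g a) ω ∂ℙ := by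
      congr 1
      funext ω
      rw [Finset.prod_insert ha, Pi.mul_apply, Finset.prod_apply, mul_comm]
    calc ∫ ω, ∏ i ∈ insert a s, g i ω ∂ℙ
        = integral ℙ ((∏ j ∈ s, g j) * g a) := e1
      _ = integral ℙ (∏ j ∈ s, g j) * integral ℙ (g a) := key
      _ = (∫ ω, ∏ i ∈ s, g i ω ∂ℙ) * ∫ ω, g a ω ∂ℙ := by rw [hfun]
      _ = (∫ ω, g a ω ∂ℙ) * ∏ i ∈ s, ∫ ω, g i ω ∂ℙ := by rw [ih, mul_comm]

/-- Bound on the expectation of the product over independent Poisson variables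
`Z k ~ Poisson(1/k)`, `k = 1,…,m`. -/
theorem poisson_product_expectation_bound (ρ : ℝ) (hρ : ρ ∈ Set.Ioo (0 : ℝ) 1)
    (d m : ℕ) (hd : 1 ≤ d) (hm : 1 ≤ m)
    {Ω : Type*} [MeasureSpace Ω] [IsProbabilityMeasure (ℙ : Measure Ω)]
    (Z : Fin m → Ω → ℕ) (hmeas : ∀ i, Measurable (Z i))
    (hindep : iIndepFun Z ℙ)
    (hlaw : ∀ i : Fin m, Measure.map (Z i) ℙ = poissonMeasure (1 / ((i : ℕ) + 1) : ℝ≥0)) :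
    ∫ ω, ∏ i : Fin m, (1 / (1 - ρ ^ (2 * ((i : ℕ) + 1)))) ^ (d * Z i ω) ∂ℙ ≤
      Real.exp (d * ρ ^ 2 / (1 - ρ ^ 2) +
        (d * (d + 1) / (2 * (1 - ρ ^ 2) ^ (d + 2))) * ρ ^ 4 / (1 - ρ ^ 4)) := by
  obtain ⟨hρ0, hρ1⟩ := hρ
  set r : ℝ := ρ^2 with hr
  have hr0 : 0 < r := by positivity
  have hr1 : r < 1 := by rw [hr]; nlinarith
  have h1r : 0 < 1 - r := by linarith
  set t : Fin m → ℝ := fun i => (1/(1 - r^((i:ℕ)+1)))^d with htdef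
  have hrk1 : ∀ i : Fin m, r^((i:ℕ)+1) < 1 := by
    intro i
    calc r^((i:ℕ)+1) ≤ r^1 := pow_le_pow_of_le_one hr0.le hr1.le (by omega)
      _ < 1 := by rw [pow_one]; exact hr1
  have hrk0 : ∀ i : Fin m, 0 < r^((i:ℕ)+1) := fun i => pow_pos hr0 _
  have ht1 : ∀ i : Fin m, 1 ≤ t i := by
    intro i
    apply one_le_pow₀
    rw [le_div_iff₀ (by linarith [hrk1 i])]
    linarith [hrk0 i]
  have hbase : ∀ i : Fin m, (1 / (1 - ρ ^ (2 * ((i:ℕ) + 1)))) = 1/(1 - r^((i:ℕ)+1)) := by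
    intro i; rw [pow_mul]
  set g : Fin m → Ω → ℝ := fun i ω => (t i)^(Z i ω) with hgdef
  have hgmeas : ∀ i, Measurable (g i) := fun i =>
    (measurable_from_top (f := fun n : ℕ => (t i)^n)).comp (hmeas i)
  have hgpos : ∀ i ω, 0 ≤ g i ω := fun i ω => pow_nonneg (by linarith [ht1 i]) _
  have hgindep : iIndepFun g ℙ :=
    hindep.comp (fun i (n : ℕ) => (t i)^n) (fun i => measurable_from_top)
  have hinteq : ∫ ω, ∏ i : Fin m, (1 / (1 - ρ ^ (2 * ((i : ℕ) + 1)))) ^ (d * Z i ω) ∂ℙ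
      = ∫ ω, ∏ i : Fin m, g i ω ∂ℙ := by
    congr 1; funext ω; congr 1; funext i
    rw [hbase i, pow_mul]
  have hgint : ∀ i : Fin m, ∫ ω, g i ω ∂ℙ
      = Real.exp ((1/((i:ℕ)+1) : ℝ) * (t i - 1)) := by
    intro i
    have h1 : ∫ ω, g i ω ∂ℙ = ∫ n : ℕ, (t i)^n ∂(Measure.map (Z i) ℙ) := by
      rw [integral_map (hmeas i).aemeasurable
        (measurable_from_top (f := fun n : ℕ => (t i)^n)).aestronglyMeasurable]
    rw [h1, hlaw i, (aux_poisson_integral _ _ (ht1 i)).2]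
    congr 1
  rw [hinteq, aux_indep_prod g hgmeas hgpos hgindep Finset.univ]
  have hprodexp : ∏ i : Fin m, ∫ ω, g i ω ∂ℙ
      = Real.exp (∑ i : Fin m, (1/((i:ℕ)+1) : ℝ) * (t i - 1)) := by
    rw [Real.exp_sum]
    exact Finset.prod_congr rfl fun i _ => hgint i
  rw [hprodexp]
  apply Real.exp_le_exp.mpr
  set C : ℝ := (d*(d+1)/2) * (1/(1-r))^(d+2) with hC
  have hC0 : 0 ≤ C := by
    rw [hC]
    exact mul_nonneg (by positivity) (pow_nonneg (le_of_lt (one_div_pos.mpr h1r)) _)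
  have hd0 : (0:ℝ) ≤ (d:ℝ) := Nat.cast_nonneg d
  have hterm : ∀ i : Fin m, (1/((i:ℕ)+1) : ℝ) * (t i - 1)
      ≤ (d:ℝ) * (r^((i:ℕ)+1)/(((i:ℕ):ℝ)+1)) + C * ((r^2)^((i:ℕ)+1)/(((i:ℕ):ℝ)+1)) := by
    intro i
    set x : ℝ := r^((i:ℕ)+1) with hx
    have hx0 : 0 ≤ x := (hrk0 i).le
    have hx1 : x < 1 := hrk1 i
    have hxr : x ≤ r := by
      calc x ≤ r^1 := pow_le_pow_of_le_one hr0.le hr1.le (by omega)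
        _ = r := pow_one r
    have hk := aux_key x hx0 hx1 d
    have hmono : (1/(1-x))^(d+2) ≤ (1/(1-r))^(d+2) := by
      apply pow_le_pow_left₀ (le_of_lt (one_div_pos.mpr (by linarith)))
      exact one_div_le_one_div_of_le h1r (by linarith)
    have ht_le : t i ≤ 1 + d*x + C*x^2 := by
      refine hk.trans ?_
      rw [hC]
      have hmul := mul_le_mul_of_nonneg_left hmono
        (by positivity : (0:ℝ) ≤ (d:ℝ)*((d:ℝ)+1)/2 * x^2)
      linarith
    have hkpos : (0:ℝ) < ((i:ℕ):ℝ)+1 := by positivity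
    have hx2 : x^2 = (r^2)^((i:ℕ)+1) := by rw [hx]; ring
    rw [← hx2]
    have hfinal : (t i - 1)/(((i:ℕ):ℝ)+1) ≤ ((d:ℝ)*x + C*x^2)/(((i:ℕ):ℝ)+1) :=
      (div_le_div_iff_of_pos_right hkpos).mpr (by linarith [ht_le])
    have hcomb : (d:ℝ)*(x/(((i:ℕ):ℝ)+1)) + C*(x^2/(((i:ℕ):ℝ)+1))
        = ((d:ℝ)*x + C*x^2)/(((i:ℕ):ℝ)+1) := by ring
    have hl : (1/((i:ℕ)+1) : ℝ) * (t i - 1) = (t i - 1)/(((i:ℕ):ℝ)+1) := by ring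
    rw [hl, hcomb]
    exact hfinal
  have hsum1 := aux_sum_pow_div r hr0.le hr1 m
  have hr2_0 : (0:ℝ) ≤ r^2 := by positivity
  have hr2_1 : r^2 < 1 := by nlinarith
  have hsum2 := aux_sum_pow_div (r^2) hr2_0 hr2_1 m
  calc ∑ i : Fin m, (1/((i:ℕ)+1) : ℝ) * (t i - 1)
      ≤ ∑ i : Fin m, ((d:ℝ) * (r^((i:ℕ)+1)/(((i:ℕ):ℝ)+1))
          + C * ((r^2)^((i:ℕ)+1)/(((i:ℕ):ℝ)+1))) :=
        Finset.sum_le_sum fun i _ => hterm i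
    _ = (d:ℝ) * (∑ k ∈ Finset.range m, r^(k+1)/((k:ℝ)+1))
          + C * (∑ k ∈ Finset.range m, (r^2)^(k+1)/((k:ℝ)+1)) := by
        rw [Fin.sum_univ_eq_sum_range
          (fun k => (d:ℝ) * (r^(k+1)/((k:ℝ)+1)) + C * ((r^2)^(k+1)/((k:ℝ)+1))) m,
          Finset.sum_add_distrib, Finset.mul_sum, Finset.mul_sum]
    _ ≤ (d:ℝ) * (r/(1-r)) + C * (r^2/(1-r^2)) :=
        add_le_add (mul_le_mul_of_nonneg_left hsum1 hd0)
          (mul_le_mul_of_nonneg_left hsum2 hC0)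
    _ = (d:ℝ) * r / (1 - r) + (d:ℝ) * ((d:ℝ) + 1) / (2 * (1 - r) ^ (d + 2)) * ρ ^ 4 / (1 - ρ ^ 4) := by
        have h4 : ρ^4 = r^2 := by rw [hr]; ring
        rw [h4, hC]
        have hne1 : (1:ℝ) - r ≠ 0 := ne_of_gt h1r
        have hne2 : (1:ℝ) - r^2 ≠ 0 := by nlinarith
        have hne3 : ((1:ℝ) - r)^(d+2) ≠ 0 := pow_ne_zero _ hne1
        field_simp
        have hPQ : (1/(1-r))^(d+2) * (1-r)^(d+2) = 1 := by rw [← mul_pow, one_div_mul_cancel hne1, one_pow]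
        linear_combination (r * (1 - r) * ((d:ℝ) + 1)) * hPQ
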